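/- Suppose f : ℝ → ℂ is Schwartz and a spectrum consists of eigenvalues λ = 1/2 + k for k ∈ ℤ with multiplicity Q(1/2 + k), where Q(u) = A(u² − 1/4) for a constant A > 0. Then Σ_{k∈ℤ} Q(1/2+k) f((1/2+k)/Λ) = A(Λ³ ∫_ℝ u² f(u) du − (Λ/4) ∫_ℝ f(u) du) + O(Λ^{-∞}) as Λ → +∞. -/

import Mathlib

open MeasureTheory SchwartzMap
open scoped FourierTransform


lemma hasTemperateGrowth_sq : Function.HasTemperateGrowth (fun x : ℝ => x ^ 2) := by
  set M : ℝ →L[ℝ] ℝ →L[ℝ] ℝ := (2:ℝ) • ContinuousLinearMap.lsmul ℝ ℝ with hM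
  have hfd : (fderiv ℝ (fun x : ℝ => x ^ 2)) = ⇑M := by
    funext x
    rw [(hasDerivAt_pow 2 x).hasFDerivAt.fderiv]
    refine ContinuousLinearMap.ext fun h => ?_
    simp [hM, ContinuousLinearMap.lsmul_apply, smul_eq_mul]
    ring
  apply Function.HasTemperateGrowth.of_fderiv (k := 2) (C := 1)
  · rw [hfd]; exact M.hasTemperateGrowth
  · exact differentiable_pow 2
  · intro x
    have := abs_nonneg x
    simp only [norm_pow, Real.norm_eq_abs, one_mul]
    nlinarith

noncomputable def mulSq : 𝓢(ℝ, ℂ) →L[ℝ] 𝓢(ℝ, ℂ) :=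
  SchwartzMap.bilinLeftCLM
    ((ContinuousLinearMap.lsmul ℝ ℝ : ℝ →L[ℝ] ℂ →L[ℝ] ℂ).flip) hasTemperateGrowth_sq

lemma mulSq_apply (f : 𝓢(ℝ, ℂ)) (x : ℝ) : mulSq f x = (x ^ 2) • f x := rfl

lemma fourier_dilate (u : ℝ → ℂ) (c : ℝ) (hc : c ≠ 0) (ξ : ℝ) :
    𝓕 (fun x => u (x * c⁻¹)) ξ = |c| • 𝓕 u (c * ξ) := by
  rw [Real.fourier_real_eq, Real.fourier_real_eq]
  have h := MeasureTheory.Measure.integral_comp_mul_right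
      (fun y => 𝐞 (-(y * (c * ξ))) • u y) c⁻¹
  rw [inv_inv] at h
  rw [← h]
  congr 1
  funext x
  have hx : x * c⁻¹ * (c * ξ) = x * ξ := by
    field_simp
  rw [hx]

lemma fourier_at_zero (u : ℝ → ℂ) : 𝓕 u 0 = ∫ x, u x := by
  rw [Real.fourier_real_eq]
  simp

lemma schwartz_decay_bound (G : 𝓢(ℝ, ℂ)) (m : ℕ) :
    ∃ C : ℝ, 0 < C ∧ ∀ x : ℝ, ‖x‖ ^ m * ‖G x‖ ≤ C := by
  obtain ⟨C, hC, h⟩ := G.decay m 0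
  exact ⟨C, hC, fun x => by simpa [norm_iteratedFDeriv_zero] using h x⟩

lemma summable_inv_sq_int : Summable (fun n : ℤ => ((n : ℝ) ^ 2)⁻¹) := by
  have := (Real.summable_one_div_int_pow (p := 2)).2 one_lt_two
  simpa [one_div] using this

lemma schwartz_summable_norm (G : 𝓢(ℝ, ℂ)) : Summable (fun n : ℤ => ‖G (n : ℝ)‖) := by
  obtain ⟨C, hC, h⟩ := schwartz_decay_bound G 2
  apply Summable.of_norm_bounded (g :=
    fun n : ℤ => (if n = 0 then ‖G 0‖ else 0) + C * ((n : ℝ) ^ 2)⁻¹)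
  · apply Summable.add
    · apply summable_of_ne_finset_zero (s := {(0:ℤ)})
      intro n hn
      simp only [Finset.mem_singleton] at hn
      simp [hn]
    · exact summable_inv_sq_int.mul_left C
  · intro n
    rw [norm_norm]
    by_cases hn : n = 0
    · subst hn
      simp
    · have hn1 : (1:ℝ) ≤ |(n:ℝ)| := by
        rw [← Int.cast_abs]
        exact_mod_cast Int.one_le_abs (by exact_mod_cast hn)
      have hn0 : (0:ℝ) < (n:ℝ)^2 := by
        rw [← sq_abs]; nlinarith
      have hb := h (n : ℝ)
      rw [Real.norm_eq_abs, sq_abs] at hb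
      rw [← le_div_iff₀' hn0] at hb
      simp only [if_neg hn, zero_add, mul_comm C, ← div_eq_mul_inv]
      rw [inv_mul_eq_div]
      exact hb


-- test aux_est
lemma aux_est (k c m : ℕ) {Λ b t C : ℝ} (hkc : k + c ≤ m) (h2 : 2 ≤ m)
    (hΛ : 1 ≤ Λ) (hb : 1 ≤ b) (ht : 0 ≤ t) (h : (Λ * b) ^ m * t ≤ C) :
    Λ ^ c * t ≤ C / Λ ^ k * (b ^ 2)⁻¹ := by
  have hΛ0 : (0:ℝ) < Λ := lt_of_lt_of_le one_pos hΛ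
  have hb0 : (0:ℝ) < b := lt_of_lt_of_le one_pos hb
  have h1 : Λ ^ (k + c) * b ^ 2 ≤ (Λ * b) ^ m := by
    rw [mul_pow]
    exact mul_le_mul (pow_le_pow_right₀ hΛ hkc) (pow_le_pow_right₀ hb h2)
      (by positivity) (by positivity)
  have key : (Λ ^ c * t) * (Λ ^ k * b ^ 2) ≤ C :=
    calc (Λ ^ c * t) * (Λ ^ k * b ^ 2) = (Λ ^ (k + c) * b ^ 2) * t := by
          rw [pow_add]; ring
    _ ≤ (Λ * b) ^ m * t := mul_le_mul_of_nonneg_right h1 ht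
    _ ≤ C := h
  have he : C / Λ ^ k * (b ^ 2)⁻¹ = C / (Λ ^ k * b ^ 2) := by
    field_simp
  rw [he, le_div_iff₀ (by positivity)]
  exact key

/-- Suppose `f` is Schwartz and a spectrum consists of the eigenvalues
`λ = 1/2 + k`, `k ∈ ℤ`, with multiplicity `Q(1/2 + k)` where `Q(u) = A(u² − 1/4)`,
`A > 0`.  Then
`Σ_{k∈ℤ} Q(1/2+k) f((1/2+k)/Λ) = A(Λ³ ∫ u² f(u) du − (Λ/4) ∫ f(u) du) + O(Λ^{-∞})`
as `Λ → +∞`. -/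
theorem spectral_action_quadratic_multiplicity
    (f : SchwartzMap ℝ ℂ) (A : ℝ) (hA : 0 < A) (k : ℕ) :
    ∃ C : ℝ, ∀ Λ : ℝ, 1 ≤ Λ →
      ‖(∑' j : ℤ, (A * ((1 / 2 + (j : ℝ)) ^ 2 - 1 / 4)) • f ((1 / 2 + (j : ℝ)) / Λ))
          - A • ((Λ ^ 3) • (∫ u : ℝ, (u ^ 2) • f u) - (Λ / 4) • ∫ u : ℝ, f u)‖
        ≤ C / Λ ^ k := by
  classical
  set p : 𝓢(ℝ, ℂ) := mulSq f with hpdef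
  obtain ⟨C₁, hC₁, h₁⟩ := schwartz_decay_bound (fourierTransformCLM ℝ p) (k + 4)
  obtain ⟨C₂, hC₂, h₂⟩ := schwartz_decay_bound (fourierTransformCLM ℝ f) (k + 2)
  set S : ℝ := ∑' n : ℤ, ((n : ℝ) ^ 2)⁻¹ with hSdef
  have hS0 : 0 ≤ S := tsum_nonneg (fun n => by positivity)
  set D : ℝ := A * C₁ + A * C₂ / 4 with hDdef
  have hD0 : 0 < D := by positivity
  refine ⟨D * S, fun Λ hΛ => ?_⟩
  have hΛ0 : (0:ℝ) < Λ := lt_of_lt_of_le one_pos hΛ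
  set e : ℝ ≃L[ℝ] ℝ :=
    ContinuousLinearEquiv.unitsEquivAut ℝ (Units.mk0 Λ⁻¹ (inv_ne_zero hΛ0.ne')) with hedef
  have he : ∀ x : ℝ, e x = x * Λ⁻¹ := by
    intro x
    simp [hedef, ContinuousLinearEquiv.unitsEquivAut_apply]
  set g : 𝓢(ℝ, ℂ) := (A * Λ ^ 2) • (compCLMOfContinuousLinearEquiv ℝ e p)
      - (A / 4) • (compCLMOfContinuousLinearEquiv ℝ e f) with hgdef
  have hgapp : ∀ x : ℝ, g x = (A * (x ^ 2 - 1 / 4)) • f (x / Λ) := by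
    intro x
    have h1 : g x = (A * Λ ^ 2) • p (x * Λ⁻¹) - (A / 4) • f (x * Λ⁻¹) := by
      simp [hgdef, he]
    rw [h1, hpdef, mulSq_apply, smul_smul, ← sub_smul, div_eq_mul_inv]
    congr 1
    field_simp
  -- Poisson summation
  have hpoisson := g.tsum_eq_tsum_fourier (1/2 : ℝ)
  set G : 𝓢(ℝ, ℂ) := fourierTransformCLM ℝ g with hGdef
  -- Fourier transform of g
  have hdil : ∀ (u : 𝓢(ℝ, ℂ)) (ξ : ℝ),
      𝓕 ⇑(compCLMOfContinuousLinearEquiv ℝ e u) ξ = Λ • 𝓕 ⇑u (Λ * ξ) := by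
    intro u ξ
    have hco : ⇑(compCLMOfContinuousLinearEquiv ℝ e u) = fun x => u (x * Λ⁻¹) :=
      funext fun x => by simp [he]
    rw [hco, fourier_dilate ⇑u Λ hΛ0.ne' ξ, abs_of_pos hΛ0]
  have hFg : ∀ ξ : ℝ, G ξ
      = (A * Λ ^ 2 * Λ) • 𝓕 ⇑p (Λ * ξ) - (A / 4 * Λ) • 𝓕 ⇑f (Λ * ξ) := by
    intro ξ
    have h0 : G ξ = (A * Λ ^ 2) • (𝓕 ⇑(compCLMOfContinuousLinearEquiv ℝ e p) ξ)
        - (A / 4) • (𝓕 ⇑(compCLMOfContinuousLinearEquiv ℝ e f) ξ) := by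
      rw [hGdef, hgdef]
      simp only [map_sub, _root_.map_smul, sub_apply, smul_apply, fourierTransformCLM_apply, fourier_coe]
    rw [h0, hdil p ξ, hdil f ξ, smul_smul, smul_smul]
  -- norm of fourier characters
  have hnormF : ∀ n : ℤ, ‖(fourier n (((1:ℝ)/2 : ℝ) : UnitAddCircle) : ℂ)‖ = 1 :=
    fun n => Circle.norm_coe _
  -- summability
  have hsum : Summable (fun n : ℤ => G (n : ℝ) * fourier n (((1:ℝ)/2 : ℝ) : UnitAddCircle)) := by
    apply Summable.of_norm_bounded (schwartz_summable_norm G)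
    intro n
    rw [norm_mul, hnormF n, mul_one]
  -- the main term
  have hpco : ⇑p = fun x : ℝ => (x ^ 2) • f x := funext (mulSq_apply f)
  have hmain : G ((0:ℤ) : ℝ) * fourier (0:ℤ) (((1:ℝ)/2 : ℝ) : UnitAddCircle)
      = A • ((Λ ^ 3) • (∫ u : ℝ, (u ^ 2) • f u) - (Λ / 4) • ∫ u : ℝ, f u) := by
    rw [fourier_zero, mul_one, Int.cast_zero, hFg 0, mul_zero, fourier_at_zero, fourier_at_zero,
      hpco, smul_sub, smul_smul, smul_smul]
    congr 2 <;> ring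
  -- rewrite the left-hand sum
  have hL : (∑' j : ℤ, (A * ((1 / 2 + (j : ℝ)) ^ 2 - 1 / 4)) • f ((1 / 2 + (j : ℝ)) / Λ))
      = ∑' n : ℤ, g ((1/2 : ℝ) + (n : ℝ)) := tsum_congr fun j => (hgapp _).symm
  rw [hL, hpoisson, show (𝓕 g : 𝓢(ℝ, ℂ)) = G from rfl, hsum.tsum_eq_add_tsum_ite 0, hmain, add_sub_cancel_left]
  -- tail estimate
  have hb : ∀ n : ℤ, ‖(if n = 0 then 0 else
        G (n : ℝ) * fourier n (((1:ℝ)/2 : ℝ) : UnitAddCircle))‖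
      ≤ D / Λ ^ k * ((n : ℝ) ^ 2)⁻¹ := by
    intro n
    by_cases hn : n = 0
    · rw [if_pos hn, norm_zero]
      positivity
    · rw [if_neg hn, norm_mul, hnormF, mul_one]
      have hn1 : (1:ℝ) ≤ |(n:ℝ)| := by
        rw [← Int.cast_abs]
        exact_mod_cast Int.one_le_abs (by exact_mod_cast hn)
      have hX1 := h₁ (Λ * n)
      have hX2 := h₂ (Λ * n)
      simp only [fourierTransformCLM_apply] at hX1 hX2
      rw [Real.norm_eq_abs, abs_mul, abs_of_pos hΛ0] at hX1 hX2
      have e1 : Λ ^ 3 * ‖𝓕 ⇑p (Λ * n)‖ ≤ C₁ / Λ ^ k * (|(n:ℝ)| ^ 2)⁻¹ :=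
        aux_est k 3 (k + 4) (by omega) (by omega) hΛ hn1 (norm_nonneg _) hX1
      have e2 : Λ ^ 1 * ‖𝓕 ⇑f (Λ * n)‖ ≤ C₂ / Λ ^ k * (|(n:ℝ)| ^ 2)⁻¹ :=
        aux_est k 1 (k + 2) (by omega) (by omega) hΛ hn1 (norm_nonneg _) hX2
      calc ‖G (n:ℝ)‖
          ≤ ‖(A * Λ ^ 2 * Λ) • 𝓕 ⇑p (Λ * n)‖ + ‖(A / 4 * Λ) • 𝓕 ⇑f (Λ * n)‖ := by
            rw [hFg]; exact norm_sub_le _ _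
        _ = A * (Λ ^ 3 * ‖𝓕 ⇑p (Λ * n)‖) + (A / 4) * (Λ ^ 1 * ‖𝓕 ⇑f (Λ * n)‖) := by
            rw [norm_smul, norm_smul, Real.norm_eq_abs, Real.norm_eq_abs,
              abs_of_pos (by positivity), abs_of_pos (by positivity)]
            ring
        _ ≤ A * (C₁ / Λ ^ k * (|(n:ℝ)| ^ 2)⁻¹) + (A / 4) * (C₂ / Λ ^ k * (|(n:ℝ)| ^ 2)⁻¹) := by
            gcongr
        _ = D / Λ ^ k * ((n : ℝ) ^ 2)⁻¹ := by
            rw [sq_abs, hDdef]; ring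
  have hsumnorm : Summable (fun n : ℤ => ‖(if n = 0 then 0 else
      G (n : ℝ) * fourier n (((1:ℝ)/2 : ℝ) : UnitAddCircle))‖) := by
    apply Summable.of_norm_bounded (schwartz_summable_norm G)
    intro n
    rw [norm_norm]
    by_cases hn : n = 0
    · simp [hn]
    · rw [if_neg hn, norm_mul, hnormF, mul_one]
  have hsumb : Summable (fun n : ℤ => D / Λ ^ k * ((n : ℝ) ^ 2)⁻¹) :=
    summable_inv_sq_int.mul_left _
  calc ‖∑' n : ℤ, (if n = 0 then 0 else
        G (n : ℝ) * fourier n (((1:ℝ)/2 : ℝ) : UnitAddCircle))‖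
      ≤ ∑' n : ℤ, ‖(if n = 0 then 0 else
        G (n : ℝ) * fourier n (((1:ℝ)/2 : ℝ) : UnitAddCircle))‖ :=
        norm_tsum_le_tsum_norm hsumnorm
    _ ≤ ∑' n : ℤ, D / Λ ^ k * ((n : ℝ) ^ 2)⁻¹ := Summable.tsum_le_tsum hb hsumnorm hsumb
    _ = D / Λ ^ k * S := tsum_mul_left
    _ = D * S / Λ ^ k := by ring
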